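/- Let c be a complete history with a linearization witness Match. Then the induced enq-order ≪ (the transitive closure of ≪¹) is a partial order over Enq(c); equivalently, the relation ≪¹ admits no cycle e_1 ≪¹ e_2 ≪¹ … ≪¹ e_{k+1} = e_1. -/

import Mathlib

/-- Invocation and response actions of queue events. -/
inductive HAction : Type
  | invEnq : ℕ → ℕ → HAction
  | resEnq : ℕ → HAction
  | invDeq : ℕ → HAction
  | resDeq : ℕ → Option ℕ → HAction
  deriving DecidableEq

def HAction.uid : HAction → ℕ
  | HAction.invEnq u _ => u
  | HAction.resEnq u => u
  | HAction.invDeq u => u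
  | HAction.resDeq u _ => u

def HAction.isInv : HAction → Bool
  | HAction.invEnq _ _ => true
  | HAction.invDeq _ => true
  | _ => false

/-- Whether the action belongs to an enqueue method. -/
def HAction.isEnqM : HAction → Bool
  | HAction.invEnq _ _ => true
  | HAction.resEnq _ => true
  | _ => false

abbrev History := List HAction

/-- Enqueue events (identified by their uid) invoked in `c`. -/
def EnqSet (c : History) : Set ℕ := {u | ∃ x, HAction.invEnq u x ∈ c}

/-- Dequeue events (identified by their uid) invoked in `c`. -/
def DeqSet (c : History) : Set ℕ := {u | HAction.invDeq u ∈ c}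

/-- `u ≺_c u'`: the response of `u` occurs before the invocation of `u'` in `c`. -/
def HPrec (c : History) (u u' : ℕ) : Prop :=
  ∃ (i j : ℕ) (a a' : HAction), i < j ∧ (c)[i]? = some a ∧ a.isInv = false ∧ a.uid = u ∧
    (c)[j]? = some a' ∧ a'.isInv = true ∧ a'.uid = u'

/-- Event `u` is pending in `c`: invoked but not responded. -/
def Pending (c : History) (u : ℕ) : Prop :=
  (∃ a ∈ c, a.isInv = true ∧ a.uid = u) ∧ ¬(∃ a ∈ c, a.isInv = false ∧ a.uid = u)

/-- A history is complete if it has no pending events. -/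
def CompleteH (c : History) : Prop := ∀ u, ¬ Pending c u

/-- Well-formed history: unique invocations and responses per uid, and every
response is preceded by its matching invocation (same uid, same method). -/
structure WellFormed (c : History) : Prop where
  invNodup : ((c.filter (fun a => a.isInv)).map HAction.uid).Nodup
  resNodup : ((c.filter (fun a => !a.isInv)).map HAction.uid).Nodup
  resMatched : ∀ (j : ℕ) (a' : HAction), (c)[j]? = some a' → a'.isInv = false →
    ∃ (i : ℕ) (a : HAction), i < j ∧ (c)[i]? = some a ∧ a.isInv = true ∧ a.uid = a'.uid ∧ a.isEnqM = a'.isEnqM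

/-- A safe mapping for a complete history `c`. -/
structure SafeMapping (c : History) (M : ℕ → Option ℕ) : Prop where
  codom : ∀ d ∈ DeqSet c, ∀ e, M d = some e → e ∈ EnqSet c
  val : ∀ d ∈ DeqSet c, ∀ e, M d = some e →
        ∃ x, HAction.invEnq e x ∈ c ∧ HAction.resDeq d (some x) ∈ c
  null : ∀ d ∈ DeqSet c, (M d = none ↔ HAction.resDeq d none ∈ c)
  inj : ∀ d ∈ DeqSet c, ∀ d' ∈ DeqSet c, ∀ e, M d = some e → M d' = some e → d = d'

/-- An ordered mapping for a complete history `c`. -/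
structure OrderedMapping (c : History) (M : ℕ → Option ℕ)
    extends SafeMapping c M : Prop where
  notAfter : ∀ d ∈ DeqSet c, ∀ e, M d = some e → ¬ HPrec c d e
  fifo : ∀ e ∈ EnqSet c, ∀ d' ∈ DeqSet c, ∀ e', M d' = some e' → HPrec c e e' →
         ∃ d ∈ DeqSet c, M d = some e ∧ ¬ HPrec c d' d

/-- The least set `Bad(c, d⊥)` of enqueue events. -/
inductive Bad (c : History) (M : ℕ → Option ℕ) (dbot : ℕ) : ℕ → Prop
  | base (e : ℕ) : e ∈ EnqSet c →
      (HPrec c dbot e ∨ ∀ d ∈ DeqSet c, M d = some e → HPrec c dbot d) →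
      Bad c M dbot e
  | stepE (ei e : ℕ) : Bad c M dbot ei → e ∈ EnqSet c → HPrec c ei e →
      Bad c M dbot e
  | stepD (ei e d : ℕ) : Bad c M dbot ei → e ∈ EnqSet c → d ∈ DeqSet c →
      M d = some e → HPrec c ei d → Bad c M dbot e

/-- A linearization witness for a complete history `c`. -/
structure LinWitness (c : History) (M : ℕ → Option ℕ)
    extends OrderedMapping c M : Prop where
  wit : ∀ d ∈ DeqSet c, HAction.resDeq d none ∈ c →
        ∀ e, Bad c M d e → ¬ HPrec c e d

/-- Two events overlap if neither precedes the other. -/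
def Overlap (c : History) (u u' : ℕ) : Prop := ¬ HPrec c u u' ∧ ¬ HPrec c u' u

/-- The one-step enq-order `≪¹` induced by a linearization witness. -/
def LL1 (c : History) (M : ℕ → Option ℕ) (e1 e2 : ℕ) : Prop :=
  e1 ∈ EnqSet c ∧ e2 ∈ EnqSet c ∧ e1 ≠ e2 ∧
  (HPrec c e1 e2 ∨
   (Overlap c e1 e2 ∧ (∃ d1 ∈ DeqSet c, M d1 = some e1) ∧
      ¬ ∃ d2 ∈ DeqSet c, M d2 = some e2) ∨
   (Overlap c e1 e2 ∧ ∃ d1 ∈ DeqSet c, ∃ d2 ∈ DeqSet c,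
      M d1 = some e1 ∧ M d2 = some e2 ∧ HPrec c d1 d2) ∨
   (Overlap c e1 e2 ∧ (∃ d1 ∈ DeqSet c, M d1 = some e1) ∧
      (∃ d2 ∈ DeqSet c, M d2 = some e2) ∧
      ∃ d ∈ DeqSet c, HAction.resDeq d none ∈ c ∧ ¬ Bad c M d e1 ∧ Bad c M d e2))

section AuxProof
open Relation

def InvAt (c : History) (u i : ℕ) : Prop :=
  ∃ a, (c)[i]? = some a ∧ a.isInv = true ∧ a.uid = u

def ResAt (c : History) (u i : ℕ) : Prop :=
  ∃ a, (c)[i]? = some a ∧ a.isInv = false ∧ a.uid = u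

lemma hprec_def {c : History} {u v : ℕ} :
    HPrec c u v ↔ ∃ i j, i < j ∧ ResAt c u i ∧ InvAt c v j := by
  constructor
  · rintro ⟨i, j, a, a', hij, hi, h1, h2, hj, h3, h4⟩
    exact ⟨i, j, hij, ⟨a, hi, h1, h2⟩, ⟨a', hj, h3, h4⟩⟩
  · rintro ⟨i, j, hij, ⟨a, hi, h1, h2⟩, ⟨a', hj, h3, h4⟩⟩
    exact ⟨i, j, a, a', hij, hi, h1, h2, hj, h3, h4⟩

lemma pairwise_of_nodup_filter_map {c : History} {p : HAction → Bool}
    (hnd : ((c.filter p).map HAction.uid).Nodup) :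
    c.Pairwise (fun a b => p a = true → p b = true → a.uid ≠ b.uid) := by
  have h1 : (c.filter p).Pairwise (fun a b => a.uid ≠ b.uid) := List.pairwise_map.mp hnd
  have h2 : (List.filter (fun b => decide (p b = true)) c) = c.filter p := by simp
  rw [← h2] at h1
  have h3 := List.pairwise_filter.mp h1
  exact h3.imp (by intro a b hx ha hb; exact hx (by simpa using ha) (by simpa using hb))

lemma idx_unique_of_pairwise {c : History} {p : HAction → Bool}
    (hp : c.Pairwise (fun a b => p a = true → p b = true → a.uid ≠ b.uid))
    {i j : ℕ} {a b : HAction} (hi : (c)[i]? = some a) (hj : (c)[j]? = some b)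
    (hpa : p a = true) (hpb : p b = true) (huid : a.uid = b.uid) : i = j := by
  rw [List.getElem?_eq_some_iff] at hi hj
  obtain ⟨hi1, hi2⟩ := hi
  obtain ⟨hj1, hj2⟩ := hj
  subst hi2; subst hj2
  rcases lt_trichotomy i j with h | h | h
  · exact absurd huid (List.pairwise_iff_get.mp hp ⟨i, hi1⟩ ⟨j, hj1⟩ h hpa hpb)
  · exact h
  · exact absurd huid.symm (List.pairwise_iff_get.mp hp ⟨j, hj1⟩ ⟨i, hi1⟩ h hpb hpa)

lemma invAt_unique {c : History} (hwf : WellFormed c) {u i j : ℕ}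
    (hi : InvAt c u i) (hj : InvAt c u j) : i = j := by
  obtain ⟨a, ha, ha1, ha2⟩ := hi
  obtain ⟨b, hb, hb1, hb2⟩ := hj
  exact idx_unique_of_pairwise (pairwise_of_nodup_filter_map hwf.invNodup) ha hb
    ha1 hb1 (by rw [ha2, hb2])

lemma resAt_unique {c : History} (hwf : WellFormed c) {u i j : ℕ}
    (hi : ResAt c u i) (hj : ResAt c u j) : i = j := by
  obtain ⟨a, ha, ha1, ha2⟩ := hi
  obtain ⟨b, hb, hb1, hb2⟩ := hj
  exact idx_unique_of_pairwise (pairwise_of_nodup_filter_map hwf.resNodup) ha hb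
    (by simp [ha1]) (by simp [hb1]) (by rw [ha2, hb2])

lemma invAt_lt_resAt {c : History} (hwf : WellFormed c) {u i j : ℕ}
    (hi : InvAt c u i) (hj : ResAt c u j) : i < j := by
  obtain ⟨b, hbj, hb1, hb2⟩ := hj
  obtain ⟨i0, a0, hi0j, hg, ha1, ha2, _⟩ := hwf.resMatched j b hbj hb1
  have h : InvAt c u i0 := ⟨a0, hg, ha1, by rw [ha2, hb2]⟩
  rw [invAt_unique hwf hi h]
  exact hi0j

lemma hprec_intro {c : History} {u v i j : ℕ} (hr : ResAt c u i) (hiv : InvAt c v j)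
    (hij : i < j) : HPrec c u v := hprec_def.mpr ⟨i, j, hij, hr, hiv⟩

lemma hprec_trans {c : History} (hwf : WellFormed c) {u v w : ℕ}
    (h1 : HPrec c u v) (h2 : HPrec c v w) : HPrec c u w := by
  obtain ⟨i, j, hij, hr, hiv⟩ := hprec_def.mp h1
  obtain ⟨i', j', hij', hrv, hiw⟩ := hprec_def.mp h2
  exact hprec_intro hr hiw (by have := invAt_lt_resAt hwf hiv hrv; omega)

lemma hprec_irrefl {c : History} (hwf : WellFormed c) (u : ℕ) : ¬ HPrec c u u := by
  intro h
  obtain ⟨i, j, hij, hr, hiv⟩ := hprec_def.mp h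
  have := invAt_lt_resAt hwf hiv hr
  omega

lemma hprec_interval {c : History} {a b x y : ℕ}
    (h1 : HPrec c a b) (h2 : HPrec c x y) : HPrec c a y ∨ HPrec c x b := by
  obtain ⟨i, j, hij, hr, hiv⟩ := hprec_def.mp h1
  obtain ⟨i', j', hij', hr', hiv'⟩ := hprec_def.mp h2
  rcases lt_or_ge i j' with h | h
  · exact Or.inl (hprec_intro hr hiv' h)
  · exact Or.inr (hprec_intro hr' hiv (by omega))

end AuxProof

section AuxProof2
open Relation

lemma exists_invAt_of_enq {c : History} {u : ℕ} (hu : u ∈ EnqSet c) : ∃ i, InvAt c u i := by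
  obtain ⟨x, hx⟩ := hu
  obtain ⟨n, hn⟩ := List.getElem?_of_mem hx
  exact ⟨n, ⟨_, hn, rfl, rfl⟩⟩

lemma exists_invAt_of_deq {c : History} {u : ℕ} (hu : u ∈ DeqSet c) : ∃ i, InvAt c u i := by
  obtain ⟨n, hn⟩ := List.getElem?_of_mem hu
  exact ⟨n, ⟨_, hn, rfl, rfl⟩⟩

lemma exists_resAt_of_invAt {c : History} (hcomp : CompleteH c) {u : ℕ}
    (h : ∃ i, InvAt c u i) : ∃ j, ResAt c u j := by
  obtain ⟨i, a, ha, h1, h2⟩ := h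
  have hmem : a ∈ c := by
    rw [List.getElem?_eq_some_iff] at ha
    obtain ⟨hl, hg⟩ := ha
    exact hg ▸ List.getElem_mem hl
  have hp := hcomp u
  rw [Pending] at hp
  push_neg at hp
  obtain ⟨b, hb, hb1, hb2⟩ := hp ⟨a, hmem, h1, h2⟩
  obtain ⟨n, hn⟩ := List.getElem?_of_mem hb
  exact ⟨n, ⟨b, hn, by simpa using hb1, hb2⟩⟩

open Classical in
noncomputable def invIdx (c : History) (u : ℕ) : ℕ :=
  if h : ∃ i, InvAt c u i then h.choose else 0

open Classical in
noncomputable def resIdx (c : History) (u : ℕ) : ℕ :=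
  if h : ∃ i, ResAt c u i then h.choose else 0

lemma invIdx_spec {c : History} {u : ℕ} (h : ∃ i, InvAt c u i) : InvAt c u (invIdx c u) := by
  rw [invIdx, dif_pos h]; exact h.choose_spec

lemma resIdx_spec {c : History} {u : ℕ} (h : ∃ i, ResAt c u i) : ResAt c u (resIdx c u) := by
  rw [resIdx, dif_pos h]; exact h.choose_spec

lemma hprec_iff_idx {c : History} (hwf : WellFormed c) {u v : ℕ}
    (hr : ∃ i, ResAt c u i) (hi : ∃ i, InvAt c v i) :
    HPrec c u v ↔ resIdx c u < invIdx c v := by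
  constructor
  · intro h
    obtain ⟨i, j, hij, hri, hij'⟩ := hprec_def.mp h
    have e1 : i = resIdx c u := resAt_unique hwf hri (resIdx_spec hr)
    have e2 : j = invIdx c v := invAt_unique hwf hij' (invIdx_spec hi)
    omega
  · intro h
    exact hprec_intro (resIdx_spec hr) (invIdx_spec hi) h

/-- `e` is a matched enqueue. -/
def MatchedE (c : History) (M : ℕ → Option ℕ) (e : ℕ) : Prop := ∃ d ∈ DeqSet c, M d = some e

open Classical in
noncomputable def dqOf (c : History) (M : ℕ → Option ℕ) (e : ℕ) : ℕ :=
  if h : MatchedE c M e then h.choose else 0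

lemma dqOf_spec {c : History} {M : ℕ → Option ℕ} {e : ℕ} (h : MatchedE c M e) :
    dqOf c M e ∈ DeqSet c ∧ M (dqOf c M e) = some e := by
  rw [dqOf, dif_pos h]; exact h.choose_spec

lemma dq_eq {c : History} {M : ℕ → Option ℕ} (hM : LinWitness c M) {d u : ℕ}
    (hd : d ∈ DeqSet c) (h : M d = some u) : d = dqOf c M u := by
  have hm : MatchedE c M u := ⟨d, hd, h⟩
  obtain ⟨hd', h'⟩ := dqOf_spec hm
  exact hM.inj d hd _ hd' u h h'

/-- Precedence edge between matched enqueues. -/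
def Arel (c : History) (M : ℕ → Option ℕ) (u v : ℕ) : Prop :=
  MatchedE c M u ∧ MatchedE c M v ∧ HPrec c u v

/-- Dequeue-precedence edge between matched enqueues. -/
def Brel (c : History) (M : ℕ → Option ℕ) (u v : ℕ) : Prop :=
  ∃ d1 ∈ DeqSet c, ∃ d2 ∈ DeqSet c, M d1 = some u ∧ M d2 = some v ∧ HPrec c d1 d2

noncomputable def phiIdx (c : History) (M : ℕ → Option ℕ) (e : ℕ) : ℕ := invIdx c (dqOf c M e)

lemma Brel_idx {c : History} {M : ℕ → Option ℕ} (hwf : WellFormed c) (hcomp : CompleteH c)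
    (hM : LinWitness c M) {u v : ℕ} (h : Brel c M u v) :
    resIdx c (dqOf c M u) < phiIdx c M v := by
  obtain ⟨d1, hd1, d2, hd2, hm1, hm2, hp⟩ := h
  have e1 : d1 = dqOf c M u := dq_eq hM hd1 hm1
  have e2 : d2 = dqOf c M v := dq_eq hM hd2 hm2
  rw [e1, e2] at hp
  rw [phiIdx]
  exact (hprec_iff_idx hwf (exists_resAt_of_invAt hcomp (exists_invAt_of_deq (e1 ▸ hd1)))
    (exists_invAt_of_deq (e2 ▸ hd2))).mp hp

lemma phi_lt_res {c : History} {M : ℕ → Option ℕ} (hwf : WellFormed c) (hcomp : CompleteH c)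
    {u : ℕ} (h : MatchedE c M u) : phiIdx c M u < resIdx c (dqOf c M u) := by
  have hinv := exists_invAt_of_deq (dqOf_spec h).1
  have hres := exists_resAt_of_invAt hcomp hinv
  exact invAt_lt_resAt hwf (invIdx_spec hinv) (resIdx_spec hres)

lemma Brel_matched {c : History} {M : ℕ → Option ℕ} {u v : ℕ} (h : Brel c M u v) :
    MatchedE c M u ∧ MatchedE c M v := by
  obtain ⟨d1, hd1, d2, hd2, hm1, hm2, _⟩ := h
  exact ⟨⟨d1, hd1, hm1⟩, ⟨d2, hd2, hm2⟩⟩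

lemma Brel_phi {c : History} {M : ℕ → Option ℕ} (hwf : WellFormed c) (hcomp : CompleteH c)
    (hM : LinWitness c M) {u v : ℕ} (h : Brel c M u v) : phiIdx c M u < phiIdx c M v := by
  have h1 := Brel_idx hwf hcomp hM h
  have h2 := phi_lt_res (M := M) hwf hcomp (Brel_matched h).1
  omega

lemma Arel_fifo {c : History} {M : ℕ → Option ℕ} (hwf : WellFormed c) (hcomp : CompleteH c)
    (hM : LinWitness c M) {u v : ℕ} (h : Arel c M u v) :
    phiIdx c M u ≤ resIdx c (dqOf c M v) := by
  obtain ⟨hmu, hmv, hp⟩ := h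
  obtain ⟨hdu, hmu'⟩ := dqOf_spec hmu
  obtain ⟨hdv, hmv'⟩ := dqOf_spec hmv
  have huE : u ∈ EnqSet c := hM.codom _ hdu u hmu'
  obtain ⟨d, hd, hmd, hnp⟩ := hM.fifo u huE (dqOf c M v) hdv v hmv' hp
  have e1 : d = dqOf c M u := dq_eq hM hd hmd
  rw [e1] at hnp
  rw [hprec_iff_idx hwf (exists_resAt_of_invAt hcomp (exists_invAt_of_deq hdv))
    (exists_invAt_of_deq hdu)] at hnp
  rw [phiIdx]
  omega

lemma Arel_trans {c : History} (hwf : WellFormed c) {M : ℕ → Option ℕ} {u v w : ℕ}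
    (h1 : Arel c M u v) (h2 : Arel c M v w) : Arel c M u w :=
  ⟨h1.1, h2.2.1, hprec_trans hwf h1.2.2 h2.2.2⟩

/-- Composite strictly increasing relation. -/
def Rrel (c : History) (M : ℕ → Option ℕ) (u v : ℕ) : Prop :=
  Brel c M u v ∨ ∃ w, Arel c M u w ∧ Brel c M w v

lemma Rrel_phi {c : History} {M : ℕ → Option ℕ} (hwf : WellFormed c) (hcomp : CompleteH c)
    (hM : LinWitness c M) {u v : ℕ} (h : Rrel c M u v) : phiIdx c M u < phiIdx c M v := by
  rcases h with h | ⟨w, hA, hB⟩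
  · exact Brel_phi hwf hcomp hM h
  · have h1 := Arel_fifo hwf hcomp hM hA
    have h2 := Brel_idx hwf hcomp hM hB
    omega

lemma transGen_Rrel_phi {c : History} {M : ℕ → Option ℕ} (hwf : WellFormed c)
    (hcomp : CompleteH c) (hM : LinWitness c M) {u v : ℕ}
    (h : Relation.TransGen (Rrel c M) u v) : phiIdx c M u < phiIdx c M v := by
  induction h with
  | single h => exact Rrel_phi hwf hcomp hM h
  | tail _ h ih => exact lt_trans ih (Rrel_phi hwf hcomp hM h)

end AuxProof2

section AuxProof3
open Relation

lemma bad_cross {c : History} {M : ℕ → Option ℕ} (hwf : WellFormed c) {d d' f : ℕ}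
    (h1 : Bad c M d f) (h2 : ¬ Bad c M d' f) :
    ∀ e, Bad c M d' e → Bad c M d e := by
  have X1 : ∃ a, a ∈ EnqSet c ∧
      (HPrec c d a ∨ ∀ d0 ∈ DeqSet c, M d0 = some a → HPrec c d d0) ∧ ¬ Bad c M d' a := by
    revert h2
    induction h1 with
    | base e he hb => intro h2; exact ⟨e, he, hb, h2⟩
    | stepE ei e hbi he hp ih =>
        intro h2
        by_cases hb' : Bad c M d' ei
        · exact absurd (Bad.stepE ei e hb' he hp) h2
        · exact ih hb'
    | stepD ei e dd hbi he hd hmd hp ih =>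
        intro h2
        by_cases hb' : Bad c M d' ei
        · exact absurd (Bad.stepD ei e dd hb' he hd hmd hp) h2
        · exact ih hb'
  obtain ⟨a, haE, hbase, hnb⟩ := X1
  have hnbase : ¬ (HPrec c d' a ∨ ∀ d0 ∈ DeqSet c, M d0 = some a → HPrec c d' d0) :=
    fun h => hnb (Bad.base a haE h)
  push_neg at hnbase
  obtain ⟨hna, d0, hd0, hmd0, hnd0⟩ := hnbase
  have ht : ∃ t, HPrec c d t ∧ ¬ HPrec c d' t := by
    rcases hbase with h | h
    · exact ⟨a, h, hna⟩
    · exact ⟨d0, h d0 hd0 hmd0, hnd0⟩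
  obtain ⟨t, hdt, hndt⟩ := ht
  intro e he
  induction he with
  | base e heE hb =>
      rcases hb with h | h
      · rcases hprec_interval hdt h with h' | h'
        · exact Bad.base e heE (Or.inl h')
        · exact absurd h' hndt
      · refine Bad.base e heE (Or.inr ?_)
        intro d1 hd1 hm1
        rcases hprec_interval hdt (h d1 hd1 hm1) with h' | h'
        · exact h'
        · exact absurd h' hndt
  | stepE ei e hbi heE hp ih => exact Bad.stepE ei e ih heE hp
  | stepD ei e dd hbi heE hdd hm hp ih => exact Bad.stepD ei e dd ih heE hdd hm hp

lemma badmono_D {c : History} {M : ℕ → Option ℕ} (hwf : WellFormed c) (hM : LinWitness c M)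
    {d u v d1 d2 : ℕ} (hd1 : d1 ∈ DeqSet c) (hm1 : M d1 = some u) (hd2 : d2 ∈ DeqSet c)
    (hm2 : M d2 = some v) (hp : HPrec c d1 d2) (hvE : v ∈ EnqSet c)
    (hb : Bad c M d u) : Bad c M d v := by
  have huniq : ∀ d0 ∈ DeqSet c, M d0 = some v → HPrec c d d2 → HPrec c d d0 := by
    intro d0 hd0 hm0 h
    have : d0 = d2 := hM.inj d0 hd0 d2 hd2 v hm0 hm2
    rwa [this]
  cases hb with
  | base e heE hbase =>
      rcases hbase with h | h
      · rcases hprec_interval h hp with h' | h'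
        · exact Bad.base v hvE (Or.inr (fun d0 hd0 hm0 => huniq d0 hd0 hm0 h'))
        · exact absurd h' (hM.notAfter d1 hd1 u hm1)
      · have h2 : HPrec c d d2 := hprec_trans hwf (h d1 hd1 hm1) hp
        exact Bad.base v hvE (Or.inr (fun d0 hd0 hm0 => huniq d0 hd0 hm0 h2))
  | stepE ei e hbi heE hpe =>
      rcases hprec_interval hpe hp with h' | h'
      · exact Bad.stepD ei v d2 hbi hvE hd2 hm2 h'
      · exact absurd h' (hM.notAfter d1 hd1 u hm1)
  | stepD ei e dd hbi heE hdd hmdd hpd =>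
      have he : dd = d1 := hM.inj dd hdd d1 hd1 u hmdd hm1
      rw [he] at hpd
      exact Bad.stepD ei v d2 hbi hvE hd2 hm2 (hprec_trans hwf hpd hp)

/-- LL1 restricted to matched endpoints. -/
def LL2 (c : History) (M : ℕ → Option ℕ) (u v : ℕ) : Prop :=
  LL1 c M u v ∧ MatchedE c M u ∧ MatchedE c M v

lemma classifyLL2 {c : History} {M : ℕ → Option ℕ} {u v : ℕ} (h : LL2 c M u v) :
    (Arel c M u v ∨ Brel c M u v) ∨ ∃ d, ¬ Bad c M d u ∧ Bad c M d v := by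
  obtain ⟨⟨huE, hvE, hne, hc⟩, hmu, hmv⟩ := h
  rcases hc with hp | ⟨ov, hd1, hno⟩ | ⟨ov, d1, hd1, d2, hd2, hm1, hm2, hp⟩ |
    ⟨ov, h1, h2, d, hd, hnull, hnb, hb⟩
  · exact Or.inl (Or.inl ⟨hmu, hmv, hp⟩)
  · exact absurd hmv hno
  · exact Or.inl (Or.inr ⟨d1, hd1, d2, hd2, hm1, hm2, hp⟩)
  · exact Or.inr ⟨d, hnb, hb⟩

lemma edge_mono {c : History} {M : ℕ → Option ℕ} (hwf : WellFormed c) (hM : LinWitness c M)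
    {d0 u v : ℕ} (h : LL2 c M u v) (hb : Bad c M d0 u) : Bad c M d0 v := by
  have hvE : v ∈ EnqSet c := h.1.2.1
  rcases classifyLL2 h with (⟨_, _, hp⟩ | hB) | ⟨d, hnb, hb'⟩
  · exact Bad.stepE u v hb hvE hp
  · obtain ⟨d1, hd1, d2, hd2, hm1, hm2, hp⟩ := hB
    exact badmono_D hwf hM hd1 hm1 hd2 hm2 hp hvE hb
  · exact bad_cross hwf hb hnb v hb'

lemma path_mono {c : History} {M : ℕ → Option ℕ} (hwf : WellFormed c) (hM : LinWitness c M)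
    {d0 a b : ℕ} (h : Relation.ReflTransGen (LL2 c M) a b) (hb : Bad c M d0 a) :
    Bad c M d0 b := by
  induction h with
  | refl => exact hb
  | tail _ h ih => exact edge_mono hwf hM h ih

/-- Decompose a cycle: either it stays in `Arel ∪ Brel`, or it crosses a `Bad` boundary. -/
lemma cycle_split {c : History} {M : ℕ → Option ℕ} (hwf : WellFormed c) (hM : LinWitness c M)
    {a b : ℕ} (h : Relation.TransGen (LL2 c M) a b) :
    Relation.TransGen (fun u v => Arel c M u v ∨ Brel c M u v) a b ∨
      ∃ d u, Relation.ReflTransGen (LL2 c M) a u ∧ ¬ Bad c M d u ∧ Bad c M d b := by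
  induction h with
  | single h =>
      rcases classifyLL2 h with hAB | ⟨d, hnb, hb⟩
      · exact Or.inl (Relation.TransGen.single hAB)
      · exact Or.inr ⟨d, _, Relation.ReflTransGen.refl, hnb, hb⟩
  | tail hab hbc ih =>
      rcases ih with hAB | ⟨d, u, hpath, hnbu, hbb⟩
      · rcases classifyLL2 hbc with hAB' | ⟨d, hnb, hb⟩
        · exact Or.inl (hAB.tail hAB')
        · exact Or.inr ⟨d, _, hab.to_reflTransGen, hnb, hb⟩
      · exact Or.inr ⟨d, u, hpath, hnbu, edge_mono hwf hM hbc hbb⟩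

/-- Generic cycle-contraction: collapse runs of a transitive relation `A`. -/
lemma claimC {α : Type} {A B R : α → α → Prop} (hBR : ∀ u v, B u v → R u v)
    (hABR : ∀ u w v, A u w → B w v → R u v) (hA : Transitive A) {x y : α}
    (h : Relation.TransGen (fun u v => A u v ∨ B u v) x y) :
    A x y ∨ ∃ z, Relation.TransGen R x z ∧ (z = y ∨ A z y) := by
  induction h with
  | single h =>
      rcases h with h | h
      · exact Or.inl h
      · exact Or.inr ⟨_, Relation.TransGen.single (hBR _ _ h), Or.inl rfl⟩
  | tail hab hedge ih =>
      rcases ih with hA' | ⟨z, hz, hzb⟩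
      · rcases hedge with h | h
        · exact Or.inl (hA hA' h)
        · exact Or.inr ⟨_, Relation.TransGen.single (hABR _ _ _ hA' h), Or.inl rfl⟩
      · rcases hzb with rfl | hzb
        · rcases hedge with h | h
          · exact Or.inr ⟨z, hz, Or.inr h⟩
          · exact Or.inr ⟨_, hz.tail (hBR _ _ h), Or.inl rfl⟩
        · rcases hedge with h | h
          · exact Or.inr ⟨z, hz, Or.inr (hA hzb h)⟩
          · exact Or.inr ⟨_, hz.tail (hABR _ _ _ hzb h), Or.inl rfl⟩

lemma comp_AR {c : History} {M : ℕ → Option ℕ} (hwf : WellFormed c) {z e u : ℕ}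
    (hA : Arel c M z e) (hR : Rrel c M e u) : Rrel c M z u := by
  rcases hR with h | ⟨w, hA', hB⟩
  · exact Or.inr ⟨e, hA, h⟩
  · exact Or.inr ⟨w, Arel_trans hwf hA hA', hB⟩

lemma no_AB_cycle {c : History} {M : ℕ → Option ℕ} (hwf : WellFormed c) (hcomp : CompleteH c)
    (hM : LinWitness c M) {e : ℕ}
    (h : Relation.TransGen (fun u v => Arel c M u v ∨ Brel c M u v) e e) : False := by
  rcases claimC (fun u v h => (Or.inl h : Rrel c M u v))
      (fun u w v h1 h2 => (Or.inr ⟨w, h1, h2⟩ : Rrel c M u v))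
      (fun _ _ _ h1 h2 => Arel_trans hwf h1 h2) h with hA | ⟨z, hR, hz⟩
  · exact hprec_irrefl hwf e hA.2.2
  · rcases hz with rfl | hA
    · exact lt_irrefl _ (transGen_Rrel_phi hwf hcomp hM hR)
    · obtain ⟨u, h1, h2⟩ := Relation.TransGen.head'_iff.mp hR
      exact lt_irrefl _ (transGen_Rrel_phi hwf hcomp hM
        (Relation.TransGen.head' (comp_AR hwf hA h1) h2))

lemma unm_edge {c : History} {M : ℕ → Option ℕ} (hM : LinWitness c M) {u v : ℕ}
    (h : LL1 c M u v) (hn : ¬ MatchedE c M u) : HPrec c u v ∧ ¬ MatchedE c M v := by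
  obtain ⟨huE, hvE, hne, hc⟩ := h
  rcases hc with hp | ⟨_, h1, _⟩ | ⟨_, d1, hd1, d2, hd2, hm1, _⟩ | ⟨_, h1, _⟩
  · refine ⟨hp, ?_⟩
    rintro ⟨d2, hd2, hm2⟩
    obtain ⟨dd, hdd, hmdd, _⟩ := hM.fifo u huE d2 hd2 v hm2 hp
    exact hn ⟨dd, hdd, hmdd⟩
  · exact absurd h1 hn
  · exact absurd ⟨d1, hd1, hm1⟩ hn
  · exact absurd h1 hn

lemma unm_cycle {c : History} {M : ℕ → Option ℕ} (hM : LinWitness c M) {a b : ℕ}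
    (h : Relation.TransGen (LL1 c M) a b) (hn : ¬ MatchedE c M a) :
    Relation.TransGen (HPrec c) a b ∧ ¬ MatchedE c M b := by
  induction h with
  | single h =>
      obtain ⟨h1, h2⟩ := unm_edge hM h hn
      exact ⟨Relation.TransGen.single h1, h2⟩
  | tail _ h ih =>
      obtain ⟨h1, h2⟩ := ih
      obtain ⟨h3, h4⟩ := unm_edge hM h h2
      exact ⟨h1.tail h3, h4⟩

lemma LL2_src {c : History} {M : ℕ → Option ℕ} {a b : ℕ}
    (h : Relation.TransGen (LL2 c M) a b) : MatchedE c M a := by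
  induction h with
  | single h => exact h.2.1
  | tail _ _ ih => exact ih

lemma to_matched {c : History} {M : ℕ → Option ℕ} (hM : LinWitness c M) {a b : ℕ}
    (h : Relation.TransGen (LL1 c M) a b) (hmb : MatchedE c M b) :
    MatchedE c M a → Relation.TransGen (LL2 c M) a b := by
  induction h using Relation.TransGen.head_induction_on with
  | single h => exact fun hma => Relation.TransGen.single ⟨h, hma, hmb⟩
  | @head a' c' h h' ih =>
      intro hma
      by_cases hmc : MatchedE c M c'
      · exact (ih hmc).head ⟨h, hma, hmc⟩
      · exact absurd hmb (unm_cycle hM h' hmc).2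

end AuxProof3

/-- The enq-order (the transitive closure of `≪¹`) is a (strict) partial order:
`≪¹` admits no cycle. -/
theorem enq_order_partial (c : History) (M : ℕ → Option ℕ)
    (hwf : WellFormed c) (hcomp : CompleteH c) (hM : LinWitness c M) :
    ∀ e : ℕ, ¬ Relation.TransGen (LL1 c M) e e := by
  intro e hcyc
  by_cases hme : MatchedE c M e
  · have h2 : Relation.TransGen (LL2 c M) e e := to_matched hM hcyc hme hme
    rcases cycle_split hwf hM h2 with hAB | ⟨d, u, hpath, hnbu, hbe⟩
    · exact no_AB_cycle hwf hcomp hM hAB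
    · exact hnbu (path_mono hwf hM hpath hbe)
  · have h3 := (unm_cycle hM hcyc hme).1
    have htr : Transitive (HPrec c) := fun _ _ _ hxy hyz => hprec_trans hwf hxy hyz
    rw [@Relation.transGen_eq_self _ _ ⟨htr⟩] at h3
    exact hprec_irrefl hwf e h3
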